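/- Let d_P, d_R be positive integers and let ρ be a Hermitian positive semidefinite matrix of trace 1 indexed by Fin d_P × Fin d_R, with eigenvalues p_1 ≥ p_2 ≥ … ≥ p_{d_P d_R} listed in decreasing order (with multiplicity), and set q_m = ∑_{j=1}^{d_R} p_{(m-1)d_R + j} for 1 ≤ m ≤ d_P. Then there exists a unitary matrix V of size d_P d_R such that the partial trace over R of V ρ V† equals the diagonal matrix diag(q_1, …, q_{d_P}); consequently the von Neumann entropy of this reduced matrix equals -∑_{m=1}^{d_P} q_m log₂ q_m. -/

import Mathlib

open Finset ComplexOrder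

/-- The index `(m-1)·d_R + j` (0-indexed: `m·d_R + j`) inside `Fin (d_P * d_R)`. -/
def blockIdx {dP dR : ℕ} (m : Fin dP) (j : Fin dR) : Fin (dP * dR) :=
  ⟨m.val * dR + j.val, by
    calc m.val * dR + j.val < m.val * dR + dR := Nat.add_lt_add_left j.isLt _
      _ = (m.val + 1) * dR := by ring
      _ ≤ dP * dR := Nat.mul_le_mul_right _ m.isLt⟩

/-- Partial trace over the second (R) factor. -/
noncomputable def ptraceR (dP dR : ℕ)
    (M : Matrix (Fin dP × Fin dR) (Fin dP × Fin dR) ℂ) :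
    Matrix (Fin dP) (Fin dP) ℂ :=
  fun m n => ∑ α : Fin dR, M (m, α) (n, α)

section auxlemmas

open Polynomial Matrix

variable {n : Type*} [Fintype n] [DecidableEq n]

lemma permMatrix_star (σ : Equiv.Perm n) :
    star (σ.toPEquiv.toMatrix : Matrix n n ℂ) = σ.symm.toPEquiv.toMatrix := by
  ext i j
  simp only [Matrix.star_apply, PEquiv.toMatrix_apply, Equiv.toPEquiv_apply, Option.mem_def,
    Option.some.injEq, apply_ite (star : ℂ → ℂ), star_one, star_zero]
  have h : (σ j = i) ↔ (σ.symm i = j) := by constructor <;> intro hh <;> simp [← hh]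
  simp only [h]

lemma permMatrix_mem_unitary (σ : Equiv.Perm n) :
    (σ.toPEquiv.toMatrix : Matrix n n ℂ) ∈ Matrix.unitaryGroup n ℂ := by
  rw [Matrix.mem_unitaryGroup_iff]
  rw [permMatrix_star, ← PEquiv.toMatrix_trans, ← Equiv.toPEquiv_trans]
  simp [Equiv.toPEquiv_refl]

lemma charpoly_diag (d : n → ℂ) :
    (Matrix.diagonal d).charpoly = ∏ i, (X - C (d i)) := by
  rw [Matrix.charpoly, Matrix.charmatrix, Matrix.scalar_apply, RingHom.mapMatrix_apply,
    Matrix.diagonal_map (map_zero _), Matrix.diagonal_sub, Matrix.det_diagonal]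

lemma charpoly_unitary_conj (U M : Matrix n n ℂ) (hU : U ∈ Matrix.unitaryGroup n ℂ) :
    (U * M * star U).charpoly = M.charpoly := by
  cases isEmpty_or_nonempty n
  · simp [Matrix.charpoly]
  · rw [Matrix.charpoly, Matrix.charpoly, Matrix.charmatrix, Matrix.charmatrix]
    set f : Matrix n n ℂ →+* Matrix n n ℂ[X] := RingHom.mapMatrix (C : ℂ →+* ℂ[X]) with hf
    have h1 : f U * f (star U) = 1 := by
      rw [← _root_.map_mul, (Matrix.mem_unitaryGroup_iff).mp hU, _root_.map_one]
    have hc := (Matrix.scalar_commute (X : ℂ[X]) (fun r => Commute.all _ _) (f U)).eq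
    have hs : Matrix.scalar n (X : ℂ[X]) = f U * Matrix.scalar n (X : ℂ[X]) * f (star U) := by
      calc Matrix.scalar n (X:ℂ[X]) = Matrix.scalar n (X:ℂ[X]) * (f U * f (star U)) := by
            rw [h1, mul_one]
        _ = (Matrix.scalar n (X:ℂ[X]) * f U) * f (star U) := by rw [mul_assoc]
        _ = f U * Matrix.scalar n (X:ℂ[X]) * f (star U) := by rw [hc]
    rw [_root_.map_mul, _root_.map_mul]
    conv_lhs => rw [hs]
    rw [show f U * Matrix.scalar n (X:ℂ[X]) * f (star U) - f U * f M * f (star U)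
      = f U * (Matrix.scalar n (X:ℂ[X]) - f M) * f (star U) by noncomm_ring]
    rw [Matrix.det_mul, Matrix.det_mul]
    have h3 : (f U).det * (f (star U)).det = 1 := by rw [← Matrix.det_mul, h1, Matrix.det_one]
    calc (f U).det * (Matrix.scalar n (X:ℂ[X]) - f M).det * (f (star U)).det
        = (Matrix.scalar n (X:ℂ[X]) - f M).det * ((f U).det * (f (star U)).det) := by ring
      _ = _ := by rw [h3, mul_one]

lemma roots_prod_lin (c : n → ℂ) :
    (∏ i, (X - C (c i))).roots = Multiset.map c Finset.univ.val := by
  rw [Finset.prod_eq_multiset_prod,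
    show (fun i => X - C (c i)) = ((fun a => X - C a) ∘ c) from rfl,
    ← Multiset.map_map, Polynomial.roots_multiset_prod_X_sub_C]

lemma eigenvalues_diagonal_sum (d : n → ℝ)
    (h : (Matrix.diagonal (fun i => (d i : ℂ))).IsHermitian) (F : ℝ → ℝ) :
    ∑ i, F (h.eigenvalues i) = ∑ i, F (d i) := by
  have hcp : (Matrix.diagonal fun i => (d i : ℂ)).charpoly
      = (Matrix.diagonal (RCLike.ofReal ∘ h.eigenvalues) : Matrix n n ℂ).charpoly := by
    conv_lhs => rw [h.spectral_theorem]
    exact charpoly_unitary_conj _ _ (h.eigenvectorUnitary).2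
  rw [charpoly_diag, charpoly_diag] at hcp
  have hm : Multiset.map (fun i => ((d i : ℝ) : ℂ)) Finset.univ.val
      = Multiset.map (fun i => ((h.eigenvalues i : ℝ) : ℂ)) Finset.univ.val := by
    have h1 := congrArg Polynomial.roots hcp
    rwa [roots_prod_lin, roots_prod_lin] at h1
  have key : ∀ c : n → ℝ, ∑ i, F (c i)
      = ((Multiset.map (fun i => ((c i : ℝ) : ℂ)) Finset.univ.val).map
          (fun z => F z.re)).sum := by
    intro c
    rw [Multiset.map_map, Finset.sum_eq_multiset_sum]
    congr 1
  rw [key, key, hm]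

lemma aux_entropy (d : n → ℝ) (A : Matrix n n ℂ)
    (hAeq : A = Matrix.diagonal (fun i => (d i : ℂ))) (h : A.IsHermitian) :
    ∑ i, h.eigenvalues i * Real.logb 2 (h.eigenvalues i)
      = ∑ i, d i * Real.logb 2 (d i) := by
  subst hAeq
  exact eigenvalues_diagonal_sum d h (fun x => x * Real.logb 2 x)

end auxlemmas

theorem stmt1 (dP dR : ℕ) (hdP : 0 < dP) (hdR : 0 < dR)
    (ρ : Matrix (Fin dP × Fin dR) (Fin dP × Fin dR) ℂ)
    (hρ : ρ.PosSemidef) (htr : ρ.trace = 1)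
    -- `p` lists the eigenvalues of `ρ` with multiplicity, in decreasing order
    (p : Fin (dP * dR) → ℝ) (hmono : Antitone p)
    (hperm : ∃ e : Fin (dP * dR) ≃ (Fin dP × Fin dR),
      ∀ i, p i = hρ.isHermitian.eigenvalues (e i))
    (q : Fin dP → ℝ) (hq : ∀ m, q m = ∑ j : Fin dR, p (blockIdx m j)) :
    ∃ V ∈ Matrix.unitaryGroup (Fin dP × Fin dR) ℂ,
      ptraceR dP dR (V * ρ * star V) = Matrix.diagonal (fun m => (q m : ℂ)) ∧
      ∀ h : (ptraceR dP dR (V * ρ * star V)).IsHermitian,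
        -∑ i, h.eigenvalues i * Real.logb 2 (h.eigenvalues i)
          = -∑ m, q m * Real.logb 2 (q m) := by
  obtain ⟨e, hpe⟩ := hperm
  have hA := hρ.isHermitian
  set U : Matrix (Fin dP × Fin dR) (Fin dP × Fin dR) ℂ := (hA.eigenvectorUnitary : Matrix (Fin dP × Fin dR) (Fin dP × Fin dR) ℂ) with hU
  have hb : ∀ i : Fin dP × Fin dR, finProdFinEquiv i = blockIdx i.1 i.2 := by
    intro i
    simp only [finProdFinEquiv, Equiv.coe_fn_mk, blockIdx, Fin.ext_iff]
    ring
  set σ : Equiv.Perm (Fin dP × Fin dR) := (finProdFinEquiv.trans e) with hσ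
  set P : Matrix (Fin dP × Fin dR) (Fin dP × Fin dR) ℂ := σ.toPEquiv.toMatrix with hP
  refine ⟨P * star U, ?_, ?_⟩
  · exact mul_mem (permMatrix_mem_unitary σ) (Unitary.star_mem hA.eigenvectorUnitary.2)
  have hdiag : (P * star U) * ρ * star (P * star U)
      = Matrix.diagonal (fun i => (p (blockIdx i.1 i.2) : ℂ)) := by
    rw [star_mul, star_star]
    have h1 : (P * star U) * ρ * (U * star P) = P * (star U * ρ * U) * star P := by
      noncomm_ring
    rw [h1, (show star U * ρ * U = Matrix.diagonal (RCLike.ofReal ∘ hA.eigenvalues) from by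
        have := hA.conjStarAlgAut_star_eigenvectorUnitary
        rw [Unitary.conjStarAlgAut_apply, Unitary.coe_star, star_star] at this
        exact this), permMatrix_star σ,
      PEquiv.toMatrix_toPEquiv_mul, PEquiv.mul_toMatrix_toPEquiv]
    ext i j
    by_cases hij : i = j
    · subst hij
      simp only [Matrix.submatrix_apply, Equiv.symm_symm, id_eq, Matrix.diagonal_apply_eq,
        Function.comp_apply]
      rw [← hb i, hσ]
      simp [hpe]
    · have : σ i ≠ σ j := fun hc => hij (σ.injective hc)
      simp [Matrix.submatrix_apply, Matrix.diagonal_apply_ne _ this,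
        Matrix.diagonal_apply_ne _ hij]
  have hpt : ptraceR dP dR ((P * star U) * ρ * star (P * star U))
      = Matrix.diagonal (fun m => (q m : ℂ)) := by
    rw [hdiag]
    ext m k
    by_cases hmk : m = k
    · subst hmk
      simp only [ptraceR, Matrix.diagonal_apply_eq, hq m]
      push_cast
      rfl
    · have : ∀ α : Fin dR, (m, α) ≠ (k, α) := by
        intro α hc
        exact hmk (congrArg Prod.fst hc)
      simp [ptraceR, Matrix.diagonal_apply_ne _ hmk, Matrix.diagonal_apply_ne, this]
  refine ⟨hpt, ?_⟩
  intro h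
  exact congrArg Neg.neg (aux_entropy q _ hpt h)
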